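/- Let a₁, a₂ ∈ ℝ, 0 < α₁ < α₂, κ₁ ≥ 0, and let κ₂ > 0 satisfy κ₂ < 4α₁ and (α₁ − σα₂) + κ₂σ(2σδ + 1) < 0, where σ = (α₁+α₂)/(2α₂) and δ = κ₂/(8α₁). Set C₂ = 1 and define φ₂(x,y) = C₂(|x|^{2δ} + |y|^{2δ})/|y|^{2σδ} on U₂ = {(x,y) : x < −2 and |x|^{−1/2} < |y| < 2}. Then φ₂ is a Lyapunov function for L on U₂; in particular there exists D₂ > 0 with (Lφ₂)(x,y) ≤ δ((α₁ − σα₂) + κ₂σ(2σδ + 1))·φ₂(x,y) + D₂ for all (x,y) ∈ U₂. -/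

import Mathlib

noncomputable def Lop (a₁ a₂ α₁ α₂ κ₁ κ₂ : ℝ) (Φ : ℝ × ℝ → ℝ) (p : ℝ × ℝ) : ℝ :=
  (a₁ * p.1 - α₁ * p.1 ^ 2 + p.2 ^ 2) * deriv (fun t => Φ (t, p.2)) p.1
    + (a₂ * p.2 - α₂ * p.1 * p.2) * deriv (fun t => Φ (p.1, t)) p.2
    + κ₁ * deriv (deriv (fun t => Φ (t, p.2))) p.1
    + κ₂ * deriv (deriv (fun t => Φ (p.1, t))) p.2

/-- `φ` is a Lyapunov function for the operator `L` (with the given parameters) on `U`: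
(I) `φ` is `C^∞` on `U`; (II) `φ z → ∞` as `|z| → ∞`, `z ∈ U`;
(III) there are `C, D > 0` with `Lφ ≤ -C•φ + D` on `U`. -/
def IsLyapunovOn (a₁ a₂ α₁ α₂ κ₁ κ₂ : ℝ) (φ : ℝ × ℝ → ℝ) (U : Set (ℝ × ℝ)) : Prop :=
  ContDiffOn ℝ (⊤ : ℕ∞) φ U ∧
    (∀ M : ℝ, ∃ R : ℝ, ∀ z ∈ U, R < ‖z‖ → M < φ z) ∧
    (∃ C > (0:ℝ), ∃ D > (0:ℝ), ∀ z ∈ U, Lop a₁ a₂ α₁ α₂ κ₁ κ₂ φ z ≤ -C * φ z + D)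
noncomputable def phi2 (σ δ : ℝ) (p : ℝ × ℝ) : ℝ :=
  1 * ((|p.1| ^ (2 * δ) + |p.2| ^ (2 * δ)) / |p.2| ^ (2 * σ * δ))

def U2 : Set (ℝ × ℝ) := {p : ℝ × ℝ | p.1 < -2 ∧ |p.1| ^ (-(1:ℝ)/2) < |p.2| ∧ |p.2| < 2}

open Real Filter Topology

/-! ### Auxiliary lemmas -/

noncomputable def P (σ δ : ℝ) (p : ℝ × ℝ) : ℝ :=
  ((p.1 ^ 2) ^ δ + (p.2 ^ 2) ^ δ) * (p.2 ^ 2) ^ (-(σ * δ))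

lemma sq_rpow' {t : ℝ} (ht : 0 ≤ t) (c : ℝ) : (t ^ 2) ^ c = t ^ (2 * c) := by
  rw [← Real.rpow_natCast t 2, ← Real.rpow_mul ht]
  norm_num

lemma abs_rpow_even (t c : ℝ) : |t| ^ (2 * c) = (t ^ 2) ^ c := by
  rw [← sq_rpow' (abs_nonneg t), sq_abs]

lemma phi2_eq (σ δ : ℝ) : phi2 σ δ = P σ δ := by
  funext p
  unfold phi2 P
  rw [one_mul, div_eq_mul_inv, ← Real.rpow_neg (abs_nonneg p.2),
    show -(2*σ*δ) = 2*(-(σ*δ)) by ring, abs_rpow_even, abs_rpow_even, abs_rpow_even]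

lemma hasDerivAt_sq_rpow (c : ℝ) {t : ℝ} (ht : t ≠ 0) :
    HasDerivAt (fun u : ℝ => ((u ^ 2) ^ c : ℝ)) (2 * c * t * (t ^ 2) ^ (c - 1)) t := by
  have h1 : HasDerivAt (fun u : ℝ => u ^ 2) (2 * t) t := by
    simpa using hasDerivAt_pow 2 t
  have h3 := h1.rpow_const (p := c) (Or.inl (pow_ne_zero 2 ht))
  convert h3 using 1
  ring

lemma sq_rpow_succ {t : ℝ} (ht : t ≠ 0) (c : ℝ) : ((t^2:ℝ)) ^ c = (t^2) ^ (c-1) * t^2 := by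
  have h2 : (0:ℝ) < t^2 := by positivity
  rw [show c = (c-1) + 1 by ring, Real.rpow_add h2, Real.rpow_one]
  ring_nf

lemma hasDerivAt_sq_rpow' (c : ℝ) {t : ℝ} (ht : t ≠ 0) :
    HasDerivAt (fun u : ℝ => 2 * c * u * ((u ^ 2) ^ (c - 1) : ℝ))
      (2 * c * (2 * c - 1) * (t ^ 2) ^ (c - 1)) t := by
  have h1 : HasDerivAt (fun u : ℝ => u * ((u^2) ^ (c-1) : ℝ))
      (1 * (t^2)^(c-1) + t * (2*(c-1)*t*(t^2)^(c-1-1))) t :=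
    (hasDerivAt_id t).mul (hasDerivAt_sq_rpow (c-1) ht)
  have h2 := h1.const_mul (2*c)
  have hfe : (fun u : ℝ => 2*c*(u * ((u^2) ^ (c-1) : ℝ))) = fun u : ℝ => 2*c*u*((u^2)^(c-1):ℝ) := by
    funext u; ring
  rw [hfe] at h2
  refine h2.congr_deriv ?_
  rw [show (t^2:ℝ)^(c-1) = (t^2)^(c-1-1) * t^2 from sq_rpow_succ ht (c-1)]
  ring

section derivs
variable (σ δ : ℝ)

lemma deriv_P_x {p : ℝ × ℝ} (hx : p.1 ≠ 0) :
    deriv (fun t => P σ δ (t, p.2)) p.1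
      = 2 * δ * p.1 * (p.1 ^ 2) ^ (δ - 1) * (p.2 ^ 2) ^ (-(σ * δ)) := by
  have h := (((hasDerivAt_sq_rpow δ hx).add_const ((p.2 ^ 2) ^ δ)).mul_const
    ((p.2 ^ 2) ^ (-(σ * δ)))).deriv
  simpa [P] using h

lemma deriv2_P_x {p : ℝ × ℝ} (hx : p.1 ≠ 0) :
    deriv (deriv (fun t => P σ δ (t, p.2))) p.1
      = 2 * δ * (2 * δ - 1) * (p.1 ^ 2) ^ (δ - 1) * (p.2 ^ 2) ^ (-(σ * δ)) := by
  have hev : deriv (fun t => P σ δ (t, p.2)) =ᶠ[𝓝 p.1]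
      fun t => 2 * δ * t * (t ^ 2) ^ (δ - 1) * (p.2 ^ 2) ^ (-(σ * δ)) := by
    filter_upwards [eventually_ne_nhds hx] with t ht
    have h := (((hasDerivAt_sq_rpow δ ht).add_const ((p.2 ^ 2) ^ δ)).mul_const
      ((p.2 ^ 2) ^ (-(σ * δ)))).deriv
    simpa [P] using h
  rw [hev.deriv_eq]
  have h := ((hasDerivAt_sq_rpow' δ hx).mul_const ((p.2 ^ 2) ^ (-(σ * δ)))).deriv
  exact h

lemma P_y_local {p : ℝ × ℝ} {t : ℝ} (ht : t ≠ 0) :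
    P σ δ (p.1, t) = (p.1 ^ 2) ^ δ * (t ^ 2) ^ (-(σ * δ)) + (t ^ 2) ^ (δ - σ * δ) := by
  have h2 : (0:ℝ) < t ^ 2 := by positivity
  unfold P
  rw [add_mul, ← Real.rpow_add h2]
  ring_nf

lemma deriv_P_y_of_ne {p : ℝ × ℝ} {t : ℝ} (ht : t ≠ 0) :
    deriv (fun s => P σ δ (p.1, s)) t
      = (p.1 ^ 2) ^ δ * (2 * (-(σ * δ)) * t * (t ^ 2) ^ (-(σ * δ) - 1))
        + 2 * (δ - σ * δ) * t * (t ^ 2) ^ (δ - σ * δ - 1) := by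
  have hev : (fun s => P σ δ (p.1, s)) =ᶠ[𝓝 t]
      fun s => (p.1 ^ 2) ^ δ * (s ^ 2) ^ (-(σ * δ)) + (s ^ 2) ^ (δ - σ * δ) := by
    filter_upwards [eventually_ne_nhds ht] with s hs
    exact P_y_local σ δ hs
  rw [hev.deriv_eq]
  exact (((hasDerivAt_sq_rpow (-(σ * δ)) ht).const_mul ((p.1 ^ 2) ^ δ)).add
    (hasDerivAt_sq_rpow (δ - σ * δ) ht)).deriv

lemma deriv2_P_y {p : ℝ × ℝ} (hy : p.2 ≠ 0) :
    deriv (deriv (fun s => P σ δ (p.1, s))) p.2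
      = (p.1 ^ 2) ^ δ * (2 * (-(σ * δ)) * (2 * (-(σ * δ)) - 1) * (p.2 ^ 2) ^ (-(σ * δ) - 1))
        + 2 * (δ - σ * δ) * (2 * (δ - σ * δ) - 1) * (p.2 ^ 2) ^ (δ - σ * δ - 1) := by
  have hev : deriv (fun s => P σ δ (p.1, s)) =ᶠ[𝓝 p.2]
      fun t => (p.1 ^ 2) ^ δ * (2 * (-(σ * δ)) * t * (t ^ 2) ^ (-(σ * δ) - 1))
        + 2 * (δ - σ * δ) * t * (t ^ 2) ^ (δ - σ * δ - 1) := by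
    filter_upwards [eventually_ne_nhds hy] with t ht
    exact deriv_P_y_of_ne σ δ ht
  rw [hev.deriv_eq]
  exact (((hasDerivAt_sq_rpow' (-(σ * δ)) hy).const_mul ((p.1 ^ 2) ^ δ)).add
    (hasDerivAt_sq_rpow' (δ - σ * δ) hy)).deriv

lemma lop_P_eq (a₁ a₂ α₁ α₂ κ₁ κ₂ : ℝ) {p : ℝ × ℝ} (hx : p.1 ≠ 0) (hy : p.2 ≠ 0) :
    Lop a₁ a₂ α₁ α₂ κ₁ κ₂ (P σ δ) p =
      (a₁ * p.1 - α₁ * p.1 ^ 2 + p.2 ^ 2) *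
          (2 * δ * p.1 * (p.1 ^ 2) ^ (δ - 1) * (p.2 ^ 2) ^ (-(σ * δ)))
        + (a₂ * p.2 - α₂ * p.1 * p.2) *
          ((p.1 ^ 2) ^ δ * (2 * (-(σ * δ)) * p.2 * (p.2 ^ 2) ^ (-(σ * δ) - 1))
            + 2 * (δ - σ * δ) * p.2 * (p.2 ^ 2) ^ (δ - σ * δ - 1))
        + κ₁ * (2 * δ * (2 * δ - 1) * (p.1 ^ 2) ^ (δ - 1) * (p.2 ^ 2) ^ (-(σ * δ)))
        + κ₂ * ((p.1 ^ 2) ^ δ *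
            (2 * (-(σ * δ)) * (2 * (-(σ * δ)) - 1) * (p.2 ^ 2) ^ (-(σ * δ) - 1))
          + 2 * (δ - σ * δ) * (2 * (δ - σ * δ) - 1) * (p.2 ^ 2) ^ (δ - σ * δ - 1)) := by
  unfold Lop
  rw [deriv_P_x σ δ hx, deriv2_P_x σ δ hx, deriv_P_y_of_ne σ δ hy, deriv2_P_y σ δ hy]

end derivs

lemma rpow_split_two {X : ℝ} (hX0 : 0 < X) (a : ℝ) : X ^ a = X ^ 2 * X ^ (a - 2) := by
  have h : X ^ a = X ^ ((2:ℕ):ℝ) * X ^ (a - 2) := by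
    rw [← Real.rpow_add hX0]; congr 1; push_cast; ring
  rwa [Real.rpow_natCast] at h

lemma aux_poly (c ε p q : ℝ) (hc : 0 ≤ c) (hε : 0 < ε) (hpq : p < q) (hp : 0 ≤ p) :
    ∃ D ≥ 0, ∀ u : ℝ, 1 ≤ u → c * u ^ p ≤ ε * u ^ q + D := by
  refine ⟨c * (max ((c / ε) ^ (1 / (q - p))) 1) ^ p, by positivity, fun u hu => ?_⟩
  have hu0 : (0:ℝ) < u := lt_of_lt_of_le one_pos hu
  have hq : 0 < q - p := sub_pos.2 hpq
  by_cases h : c ≤ ε * u ^ (q - p)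
  · have h1 : c * u ^ p ≤ ε * u ^ (q - p) * u ^ p :=
      mul_le_mul_of_nonneg_right h (Real.rpow_pos_of_pos hu0 p).le
    have h2 : ε * u ^ (q - p) * u ^ p = ε * u ^ q := by
      rw [mul_assoc, ← Real.rpow_add hu0]; ring_nf
    have h5 : 0 ≤ c * (max ((c / ε) ^ (1 / (q - p))) 1) ^ p := by positivity
    linarith
  · push_neg at h
    have h1 : u ^ (q - p) < c / ε := by rw [lt_div_iff₀ hε]; nlinarith
    have h2 : u ≤ (c / ε) ^ (1 / (q - p)) := by
      have h3 := Real.rpow_le_rpow (Real.rpow_nonneg hu0.le _) h1.le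
        (by positivity : (0:ℝ) ≤ 1 / (q - p))
      rwa [← Real.rpow_mul hu0.le, mul_one_div, div_self hq.ne', Real.rpow_one] at h3
    have h3 : u ^ p ≤ (max ((c / ε) ^ (1 / (q - p))) 1) ^ p :=
      Real.rpow_le_rpow hu0.le (h2.trans (le_max_left _ _)) hp
    have h4 : c * u ^ p ≤ c * (max ((c / ε) ^ (1 / (q - p))) 1) ^ p :=
      mul_le_mul_of_nonneg_left h3 hc
    nlinarith [Real.rpow_pos_of_pos hu0 q]

set_option maxHeartbeats 1000000 in
lemma main_bound (a₁ a₂ α₁ α₂ κ₁ κ₂ σ δ : ℝ)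
    (hα₁ : 0 < α₁) (hα₂ : 0 < α₂) (hκ₁ : 0 ≤ κ₁) (hκ₂ : 0 < κ₂)
    (hδ0 : 0 < δ) (hd1 : 2 * δ < 1) (hσ0 : 0 < σ) (hσ1 : σ < 1)
    (hK : (α₁ - σ * α₂) + κ₂ * σ * (2 * σ * δ + 1) < 0) :
    ∃ D > (0:ℝ), ∀ x y : ℝ, x < -2 → |x| ^ (-(1:ℝ)/2) < |y| → |y| < 2 →
      (a₁ * x - α₁ * x ^ 2 + y ^ 2) *
          (2 * δ * x * (x ^ 2) ^ (δ - 1) * (y ^ 2) ^ (-(σ * δ)))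
        + (a₂ * y - α₂ * x * y) *
          ((x ^ 2) ^ δ * (2 * (-(σ * δ)) * y * (y ^ 2) ^ (-(σ * δ) - 1))
            + 2 * (δ - σ * δ) * y * (y ^ 2) ^ (δ - σ * δ - 1))
        + κ₁ * (2 * δ * (2 * δ - 1) * (x ^ 2) ^ (δ - 1) * (y ^ 2) ^ (-(σ * δ)))
        + κ₂ * ((x ^ 2) ^ δ *
            (2 * (-(σ * δ)) * (2 * (-(σ * δ)) - 1) * (y ^ 2) ^ (-(σ * δ) - 1))
          + 2 * (δ - σ * δ) * (2 * (δ - σ * δ) - 1) * (y ^ 2) ^ (δ - σ * δ - 1))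
      ≤ δ * ((α₁ - σ * α₂) + κ₂ * σ * (2 * σ * δ + 1)) *
          (((x ^ 2) ^ δ + (y ^ 2) ^ δ) * (y ^ 2) ^ (-(σ * δ))) + D := by
  obtain ⟨K, hKdef⟩ : ∃ K : ℝ, K = (α₁ - σ * α₂) + κ₂ * σ * (2 * σ * δ + 1) := ⟨_, rfl⟩
  rw [← hKdef] at hK ⊢
  have hK1 : δ * K < 0 := mul_neg_of_pos_of_neg hδ0 hK
  have hσδ0 : 0 < σ*δ := mul_pos hσ0 hδ0
  have hσδ : σ*δ < δ := by have hh := mul_pos (sub_pos.2 hσ1) hδ0; linarith only [hh]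
  have hc₀ : 0 < -(δ * K) / 4 := by linarith
  obtain ⟨D₁, hD₁0, hD₁⟩ := aux_poly (|2*δ*a₁ - 2*σ*δ*a₂|) (-(δ*K)/4) (2*δ+σ*δ) (2*δ+1)
    (abs_nonneg _) hc₀ (by linarith) (by positivity)
  obtain ⟨D₂, hD₂0, hD₂⟩ := aux_poly (2*α₂) (-(δ*K)/4) 1 (2*δ+1)
    (by positivity) hc₀ (by linarith) zero_le_one
  refine ⟨D₁ + D₂ + 2* |a₂| + 1, by positivity, fun x y hx hxy hy2 => ?_⟩
  obtain ⟨X, hxX, hX2⟩ : ∃ X : ℝ, x = -X ∧ 2 < X := ⟨-x, by ring, by linarith⟩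
  have hX0 : 0 < X := by linarith
  have hX1 : 1 ≤ X := by linarith
  have haX : |x| = X := by rw [hxX, abs_neg, abs_of_pos hX0]
  rw [haX] at hxy
  have hY0' : 0 < |y| := lt_trans (Real.rpow_pos_of_pos hX0 _) hxy
  obtain ⟨Y, hyY, hY0, hYlt, hXY⟩ :
      ∃ Y : ℝ, (y = Y ∨ y = -Y) ∧ 0 < Y ∧ Y < 2 ∧ X ^ (-(1:ℝ)/2) < Y := by
    refine ⟨|y|, ?_, hY0', hy2, hxy⟩
    rcases abs_choice y with h | h
    · exact Or.inl h.symm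
    · exact Or.inr (by rw [h]; ring)
  have hysq : y ^ 2 = Y ^ 2 := by rcases hyY with h | h <;> rw [h] <;> ring
  have hXsq : x ^ 2 = X ^ 2 := by rw [hxX]; ring
  -- rpow conversions
  have c1 : (x^2)^(δ-1) = X^(2*δ-2) := by
    rw [hXsq, sq_rpow' hX0.le, show 2*(δ-1) = 2*δ-2 by ring]
  have c2 : (x^2)^δ = X^(2*δ) := by rw [hXsq, sq_rpow' hX0.le]
  have c3 : (y^2)^(-(σ*δ)) = Y^(-(2*σ*δ)) := by
    rw [hysq, sq_rpow' hY0.le, show 2*(-(σ*δ)) = -(2*σ*δ) by ring]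
  have c4 : (y^2)^(-(σ*δ)-1) = Y^(-(2*σ*δ)-2) := by
    rw [hysq, sq_rpow' hY0.le, show 2*(-(σ*δ)-1) = -(2*σ*δ)-2 by ring]
  have c5 : (y^2)^(δ-σ*δ-1) = Y^(2*δ-2*σ*δ-2) := by
    rw [hysq, sq_rpow' hY0.le, show 2*(δ-σ*δ-1) = 2*δ-2*σ*δ-2 by ring]
  have c6 : (y^2)^δ = Y^(2*δ) := by rw [hysq, sq_rpow' hY0.le]
  have e_a : X^(2*δ) = X^2 * X^(2*δ-2) := rpow_split_two hX0 (2*δ)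
  have e_b : Y^(-(2*σ*δ)) = Y^2 * Y^(-(2*σ*δ)-2) := rpow_split_two hY0 (-(2*σ*δ))
  -- positivity of atoms
  have hP2 : 0 < X^(2*δ-2) := Real.rpow_pos_of_pos hX0 _
  have hQ : 0 < Y^(-(2*σ*δ)-2) := Real.rpow_pos_of_pos hY0 _
  have hR : 0 < Y^(2*δ-2*σ*δ-2) := Real.rpow_pos_of_pos hY0 _
  have hB2 : 0 < Y^(2*δ) := Real.rpow_pos_of_pos hY0 _
  -- analytic facts
  have f1 : 1 ≤ X * Y^2 := by
    have h1 : X^(-(1:ℝ)/2) * X^(-(1:ℝ)/2) = X^(-(1:ℝ)) := by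
      rw [← Real.rpow_add hX0]; norm_num
    have h2 : X^(-(1:ℝ)) = X⁻¹ := Real.rpow_neg_one X
    have h3 : X^(-(1:ℝ)/2) * X^(-(1:ℝ)/2) ≤ Y * Y :=
      mul_le_mul hXY.le hXY.le (Real.rpow_pos_of_pos hX0 _).le hY0.le
    have h4 : X⁻¹ ≤ Y^2 := by rw [← h2, ← h1, pow_two]; exact h3
    have h5 := mul_le_mul_of_nonneg_left h4 hX0.le
    rwa [mul_inv_cancel₀ hX0.ne'] at h5
  have f2 : Y^(2*δ) ≤ X^2 * X^(2*δ-2) := by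
    rw [← e_a]
    exact Real.rpow_le_rpow hY0.le (by linarith) (by positivity)
  have f4 : (1:ℝ)/2 ≤ Y^2 * Y^(-(2*σ*δ)-2) := by
    rw [← e_b]
    have h1 : (2:ℝ)^(-(2*σ*δ)) ≤ Y^(-(2*σ*δ)) :=
      Real.rpow_le_rpow_of_nonpos hY0 hYlt.le (by linarith)
    have k1 : (2:ℝ)^(2*σ*δ) ≤ 2 := by
      have h := Real.rpow_le_rpow_of_exponent_le one_le_two
        (show 2*σ*δ ≤ (1:ℝ) by linarith)
      rwa [Real.rpow_one] at h
    have k2 : (0:ℝ) < (2:ℝ)^(2*σ*δ) := Real.rpow_pos_of_pos two_pos _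
    have k3 : (2:ℝ)^(-(2*σ*δ)) = ((2:ℝ)^(2*σ*δ))⁻¹ := Real.rpow_neg (by norm_num) _
    rw [k3] at h1
    have k4 : (1:ℝ)/2 ≤ ((2:ℝ)^(2*σ*δ))⁻¹ := by
      have h := one_div_le_one_div_of_le k2 k1
      simpa [one_div] using h
    linarith
  have f5 : Y^2 * Y^(-(2*σ*δ)-2) ≤ X^(σ*δ) := by
    rw [← e_b]
    have h1 : Y^(-(2*σ*δ)) ≤ (X^(-(1:ℝ)/2))^(-(2*σ*δ)) :=
      Real.rpow_le_rpow_of_nonpos (Real.rpow_pos_of_pos hX0 _) hXY.le (by linarith)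
    have h2 : (X^(-(1:ℝ)/2))^(-(2*σ*δ)) = X^(σ*δ) := by
      rw [← Real.rpow_mul hX0.le, show (-(1:ℝ)/2) * (-(2*σ*δ)) = σ*δ by ring]
    rwa [h2] at h1
  have f7 : Y^2 * Y^(2*δ-2*σ*δ-2) ≤ 2 := by
    have e_d : Y^2 * Y^(2*δ-2*σ*δ-2) = Y^(2*δ-2*σ*δ) := (rpow_split_two hY0 (2*δ-2*σ*δ)).symm
    rw [e_d]
    have h1 : Y^(2*δ-2*σ*δ) ≤ (2:ℝ)^(2*δ-2*σ*δ) :=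
      Real.rpow_le_rpow hY0.le hYlt.le (by linarith)
    have h2 : (2:ℝ)^(2*δ-2*σ*δ) ≤ (2:ℝ)^(1:ℝ) :=
      Real.rpow_le_rpow_of_exponent_le one_le_two (by linarith)
    have h3 : (2:ℝ)^(1:ℝ) = 2 := Real.rpow_one 2
    linarith
  -- derived inequalities
  have i1 : κ₂*(2*σ*δ)*(2*σ*δ+1) * (X^2*(X^(2*δ-2)*Y^(-(2*σ*δ)-2)))
      ≤ κ₂*(2*σ*δ)*(2*σ*δ+1) * (X^3*(X^(2*δ-2)*(Y^2*Y^(-(2*σ*δ)-2)))) := by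
    have hc : 0 ≤ κ₂*(2*σ*δ)*(2*σ*δ+1) := by positivity
    have hm : X^2*(X^(2*δ-2)*Y^(-(2*σ*δ)-2)) ≤ X^3*(X^(2*δ-2)*(Y^2*Y^(-(2*σ*δ)-2))) := by
      have hh := mul_nonneg (by positivity : (0:ℝ) ≤ X^2*(X^(2*δ-2)*Y^(-(2*σ*δ)-2)))
        (sub_nonneg.2 f1)
      linarith only [hh]
    exact mul_le_mul_of_nonneg_left hm hc
  have i2 : δ*K*(X^3*(X^(2*δ-2)*(Y^2*Y^(-(2*σ*δ)-2))))
      ≤ δ*K*(X^2*(X^(2*δ-2)*(Y^2*Y^(-(2*σ*δ)-2))) + Y^(2*δ)*(Y^2*Y^(-(2*σ*δ)-2))) := by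
    have hYQ : 0 < Y^2*Y^(-(2*σ*δ)-2) := by positivity
    have j1 : Y^(2*δ)*(Y^2*Y^(-(2*σ*δ)-2)) ≤ (X^2*X^(2*δ-2))*(Y^2*Y^(-(2*σ*δ)-2)) :=
      mul_le_mul_of_nonneg_right f2 hYQ.le
    have j2 : X^2*(X^(2*δ-2)*(Y^2*Y^(-(2*σ*δ)-2))) + Y^(2*δ)*(Y^2*Y^(-(2*σ*δ)-2))
        ≤ X^3*(X^(2*δ-2)*(Y^2*Y^(-(2*σ*δ)-2))) := by
      have hh := mul_nonneg (sub_nonneg.2 hX2.le)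
        (mul_pos (mul_pos (by positivity : (0:ℝ) < X^2) hP2) hYQ).le
      linarith only [j1, hh]
    exact mul_le_mul_of_nonpos_left j2 hK1.le
  have i3 : δ*K*(X^3*(X^(2*δ-2)*(Y^2*Y^(-(2*σ*δ)-2))))
      ≤ δ*K/2*(X^3*X^(2*δ-2)) := by
    have h1 : 0 ≤ (-(δ*K)) * ((Y^2*Y^(-(2*σ*δ)-2) - 1/2) * (X^3*X^(2*δ-2))) := by
      apply mul_nonneg (by linarith)
      apply mul_nonneg (by linarith) (by positivity)
    linarith only [h1]
  have i4 : (2*δ*a₁ - 2*σ*δ*a₂) * (X^2*(X^(2*δ-2)*(Y^2*Y^(-(2*σ*δ)-2))))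
      ≤ |2*δ*a₁ - 2*σ*δ*a₂| * (X^2*(X^(2*δ-2)*X^(σ*δ))) := by
    have h1 : (2*δ*a₁ - 2*σ*δ*a₂) * (X^2*(X^(2*δ-2)*(Y^2*Y^(-(2*σ*δ)-2))))
        ≤ |2*δ*a₁ - 2*σ*δ*a₂| * (X^2*(X^(2*δ-2)*(Y^2*Y^(-(2*σ*δ)-2)))) :=
      mul_le_mul_of_nonneg_right (le_abs_self _) (by positivity)
    have h2 : |2*δ*a₁ - 2*σ*δ*a₂| * (X^2*(X^(2*δ-2)*(Y^2*Y^(-(2*σ*δ)-2))))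
        ≤ |2*δ*a₁ - 2*σ*δ*a₂| * (X^2*(X^(2*δ-2)*X^(σ*δ))) := by
      apply mul_le_mul_of_nonneg_left _ (abs_nonneg _)
      have hh := mul_le_mul_of_nonneg_left f5 (by positivity : (0:ℝ) ≤ X^2*X^(2*δ-2))
      linarith only [hh]
    linarith only [h1, h2]
  have i5 : 2*(δ-σ*δ)*a₂*(Y^2*Y^(2*δ-2*σ*δ-2)) ≤ 2* |a₂| := by
    have h1 : 0 ≤ 2*(δ-σ*δ) := by linarith
    have h2 : 2*(δ-σ*δ) ≤ 1 := by linarith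
    have h3 : 0 < Y^2*Y^(2*δ-2*σ*δ-2) := by positivity
    have h4 : 2*(δ-σ*δ)*a₂ ≤ |a₂| := by
      rcases le_or_gt 0 a₂ with ha | ha
      · have k1 : 2*(δ-σ*δ)*a₂ ≤ 1*a₂ := mul_le_mul_of_nonneg_right h2 ha
        have k2 := le_abs_self a₂
        linarith
      · have k1 : 2*(δ-σ*δ)*a₂ ≤ 0 := mul_nonpos_of_nonneg_of_nonpos h1 ha.le
        have k2 := abs_nonneg a₂
        linarith
    have h5 : 2*(δ-σ*δ)*a₂*(Y^2*Y^(2*δ-2*σ*δ-2)) ≤ |a₂| *(Y^2*Y^(2*δ-2*σ*δ-2)) :=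
      mul_le_mul_of_nonneg_right h4 h3.le
    have h6 : |a₂| *(Y^2*Y^(2*δ-2*σ*δ-2)) ≤ |a₂| *2 :=
      mul_le_mul_of_nonneg_left f7 (abs_nonneg _)
    linarith
  have i6 : 2*(δ-σ*δ)*α₂*(X*(Y^2*Y^(2*δ-2*σ*δ-2))) ≤ 2*α₂*X := by
    have h1 : 0 ≤ 2*(δ-σ*δ) := by linarith
    have h2 : 2*(δ-σ*δ) ≤ 1 := by linarith
    have h3 : 0 < Y^2*Y^(2*δ-2*σ*δ-2) := by positivity
    have k1 : 2*(δ-σ*δ)*α₂*(X*(Y^2*Y^(2*δ-2*σ*δ-2))) ≤ 1*α₂*(X*(Y^2*Y^(2*δ-2*σ*δ-2))) :=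
      mul_le_mul_of_nonneg_right (mul_le_mul_of_nonneg_right h2 hα₂.le)
        (mul_pos hX0 h3).le
    have k2 : α₂*(X*(Y^2*Y^(2*δ-2*σ*δ-2))) ≤ α₂*(X*2) :=
      mul_le_mul_of_nonneg_left (mul_le_mul_of_nonneg_left f7 hX0.le) hα₂.le
    linarith
  have i7 : 0 ≤ 2*δ*(X*(X^(2*δ-2)*((Y^2*Y^(-(2*σ*δ)-2))*Y^2))) := by positivity
  have i8 : 0 ≤ κ₁*(2*δ*(1-2*δ))*(X^(2*δ-2)*(Y^2*Y^(-(2*σ*δ)-2))) := by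
    have k1 := mul_pos hδ0 (show (0:ℝ) < 1-2*δ by linarith)
    apply mul_nonneg (mul_nonneg hκ₁ (by linarith [k1])) (by positivity)
  have i9 : 0 ≤ κ₂*(2*(δ-σ*δ)*(1-2*(δ-σ*δ)))*Y^(2*δ-2*σ*δ-2) := by
    have k1 := mul_pos (show (0:ℝ) < 2*(δ-σ*δ) by linarith)
      (show (0:ℝ) < 1-2*(δ-σ*δ) by linarith)
    apply mul_nonneg (mul_nonneg hκ₂.le (by linarith [k1])) hR.le
  have hD₁' : |2*δ*a₁ - 2*σ*δ*a₂| * (X^2*(X^(2*δ-2)*X^(σ*δ)))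
      ≤ -(δ*K)/4 * (X*(X^2*X^(2*δ-2))) + D₁ := by
    have h := hD₁ X hX1
    have g1 : X^(2*δ+σ*δ) = X^2*(X^(2*δ-2)*X^(σ*δ)) := by
      rw [Real.rpow_add hX0, e_a]; ring
    have g2 : X^(2*δ+1) = X*(X^2*X^(2*δ-2)) := by
      rw [Real.rpow_add hX0, e_a, Real.rpow_one]; ring
    rw [g1, g2] at h
    exact h
  have hD₂' : 2*α₂*X ≤ -(δ*K)/4 * (X*(X^2*X^(2*δ-2))) + D₂ := by
    have h := hD₂ X hX1
    have g2 : X^(2*δ+1) = X*(X^2*X^(2*δ-2)) := by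
      rw [Real.rpow_add hX0, e_a, Real.rpow_one]; ring
    rw [Real.rpow_one, g2] at h
    exact h
  have iK1 : δ*K*(X^3*(X^(2*δ-2)*(Y^2*Y^(-(2*σ*δ)-2))))
      = δ*((α₁ - σ*α₂) + κ₂*σ*(2*σ*δ+1))*(X^3*(X^(2*δ-2)*(Y^2*Y^(-(2*σ*δ)-2)))) := by
    rw [hKdef]
  -- rewrite the goal into atoms and finish
  rw [c1, c2, c3, c4, c5, c6, hysq, hxX, e_a, e_b]
  rcases hyY with h | h <;> rw [h] <;>
    linarith only [i1, i2, i3, i4, i5, i6, i7, i8, i9, hD₁', hD₂', abs_nonneg a₂,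
      hD₁0, hD₂0, iK1]
set_option maxHeartbeats 1000000 in
/-- `φ₂` is a Lyapunov function on `U₂` (with `C₂ = 1`). -/
theorem statement3 (a₁ a₂ α₁ α₂ κ₁ κ₂ σ δ : ℝ)
    (hα₁ : 0 < α₁) (hα : α₁ < α₂) (hκ₁ : 0 ≤ κ₁) (hκ₂ : 0 < κ₂) (hκ₂' : κ₂ < 4 * α₁)
    (hσ : σ = (α₁ + α₂) / (2 * α₂)) (hδ : δ = κ₂ / (8 * α₁))
    (hneg : (α₁ - σ * α₂) + κ₂ * σ * (2 * σ * δ + 1) < 0) :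
    IsLyapunovOn a₁ a₂ α₁ α₂ κ₁ κ₂ (phi2 σ δ) U2 ∧
      ∃ D₂ > (0:ℝ), ∀ p ∈ U2,
        Lop a₁ a₂ α₁ α₂ κ₁ κ₂ (phi2 σ δ) p
          ≤ δ * ((α₁ - σ * α₂) + κ₂ * σ * (2 * σ * δ + 1)) * phi2 σ δ p + D₂ := by
  have hα₂ : 0 < α₂ := by linarith
  have hσ0 : 0 < σ := by rw [hσ]; positivity
  have hσ1 : σ < 1 := by
    rw [hσ, div_lt_one (by positivity)]; linarith
  have hδ0 : 0 < δ := by rw [hδ]; positivity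
  have hd1 : 2 * δ < 1 := by
    rw [hδ, show (2:ℝ) * (κ₂ / (8 * α₁)) = κ₂ / (4 * α₁) by field_simp; ring,
      div_lt_one (by positivity)]
    linarith
  have h2sd : 2 * σ * δ ≤ 1 := by nlinarith [mul_pos (sub_pos.2 hσ1) hδ0]
  obtain ⟨D, hD0, hbound⟩ := main_bound a₁ a₂ α₁ α₂ κ₁ κ₂ σ δ hα₁ hα₂ hκ₁ hκ₂
    hδ0 hd1 hσ0 hσ1 hneg
  have hKneg : δ * ((α₁ - σ * α₂) + κ₂ * σ * (2 * σ * δ + 1)) < 0 :=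
    mul_neg_of_pos_of_neg hδ0 hneg
  -- the main bound at every point of U2
  have key : ∀ p ∈ U2, Lop a₁ a₂ α₁ α₂ κ₁ κ₂ (phi2 σ δ) p
      ≤ δ * ((α₁ - σ * α₂) + κ₂ * σ * (2 * σ * δ + 1)) * phi2 σ δ p + D := by
    intro p hp
    obtain ⟨hp1, hp2, hp3⟩ := hp
    have hx0 : p.1 ≠ 0 := by intro h; rw [h] at hp1; norm_num at hp1
    have hy0 : p.2 ≠ 0 := by
      have h1 : 0 < |p.1| ^ (-(1:ℝ)/2) :=
        Real.rpow_pos_of_pos (abs_pos.2 hx0) _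
      have h2 : 0 < |p.2| := lt_trans h1 hp2
      exact abs_pos.1 h2
    rw [phi2_eq, lop_P_eq σ δ a₁ a₂ α₁ α₂ κ₁ κ₂ hx0 hy0]
    have h := hbound p.1 p.2 hp1 hp2 hp3
    simpa [P] using h
  refine ⟨⟨?_, ?_, ?_⟩, D, hD0, key⟩
  · -- smoothness
    rw [phi2_eq]
    intro p hp
    obtain ⟨hp1, hp2, hp3⟩ := hp
    have hx0 : p.1 ≠ 0 := by intro h; rw [h] at hp1; norm_num at hp1
    have hy0 : p.2 ≠ 0 := by
      have h1 : 0 < |p.1| ^ (-(1:ℝ)/2) := Real.rpow_pos_of_pos (abs_pos.2 hx0) _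
      exact abs_pos.1 (lt_trans h1 hp2)
    apply ContDiffAt.contDiffWithinAt
    have h1 : ContDiffAt ℝ (⊤:ℕ∞) (fun q : ℝ × ℝ => ((q.1 ^ 2) ^ δ : ℝ)) p :=
      (Real.contDiffAt_rpow_const_of_ne (pow_ne_zero 2 hx0)).comp p
        ((contDiff_fst.pow 2).contDiffAt)
    have h2 : ContDiffAt ℝ (⊤:ℕ∞) (fun q : ℝ × ℝ => ((q.2 ^ 2) ^ δ : ℝ)) p :=
      (Real.contDiffAt_rpow_const_of_ne (pow_ne_zero 2 hy0)).comp p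
        ((contDiff_snd.pow 2).contDiffAt)
    have h3 : ContDiffAt ℝ (⊤:ℕ∞) (fun q : ℝ × ℝ => ((q.2 ^ 2) ^ (-(σ * δ)) : ℝ)) p :=
      (Real.contDiffAt_rpow_const_of_ne (pow_ne_zero 2 hy0)).comp p
        ((contDiff_snd.pow 2).contDiffAt)
    exact (h1.add h2).mul h3
  · -- growth
    intro M
    refine ⟨max 2 ((2 * |M| + 2) ^ (2 * δ)⁻¹), fun z hz hR => ?_⟩
    obtain ⟨hz1, hz2, hz3⟩ := hz
    have hx0 : z.1 ≠ 0 := by intro h; rw [h] at hz1; norm_num at hz1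
    have hy0 : 0 < |z.2| := by
      have h1 : 0 < |z.1| ^ (-(1:ℝ)/2) := Real.rpow_pos_of_pos (abs_pos.2 hx0) _
      exact lt_trans h1 hz2
    have hznorm : ‖z‖ = max |z.1| |z.2| := by
      rw [Prod.norm_def, Real.norm_eq_abs, Real.norm_eq_abs]
    have hxa : max 2 ((2 * |M| + 2) ^ (2 * δ)⁻¹) < |z.1| := by
      by_contra hcon
      push_neg at hcon
      have h1 : ‖z‖ ≤ max 2 ((2 * |M| + 2) ^ (2 * δ)⁻¹) := by
        rw [hznorm]
        exact max_le hcon (le_trans hz3.le (le_max_left _ _))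
      linarith
    have hB : (2 * |M| + 2) ^ (2 * δ)⁻¹ < |z.1| :=
      lt_of_le_of_lt (le_max_right _ _) hxa
    have h1 : 2 * |M| + 2 ≤ |z.1| ^ (2 * δ) := by
      have h2 := Real.rpow_lt_rpow (by positivity) hB (by positivity : (0:ℝ) < 2 * δ)
      rw [← Real.rpow_mul (by positivity : (0:ℝ) ≤ 2 * |M| + 2),
        inv_mul_cancel₀ (by positivity : (2*δ:ℝ) ≠ 0), Real.rpow_one] at h2
      exact h2.le
    have hC2 : |z.2| ^ (2 * σ * δ) ≤ 2 := by
      have ha : |z.2| ^ (2 * σ * δ) ≤ 2 ^ (2 * σ * δ) :=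
        Real.rpow_le_rpow (abs_nonneg _) hz3.le (by positivity)
      have hb : (2:ℝ) ^ (2 * σ * δ) ≤ 2 ^ (1:ℝ) :=
        Real.rpow_le_rpow_of_exponent_le one_le_two h2sd
      rw [Real.rpow_one] at hb
      linarith
    have hC0 : 0 < |z.2| ^ (2 * σ * δ) := Real.rpow_pos_of_pos hy0 _
    have s1 : |z.1| ^ (2 * δ) / 2 ≤ |z.1| ^ (2 * δ) / |z.2| ^ (2 * σ * δ) :=
      div_le_div_of_nonneg_left (by positivity) hC0 hC2
    have s2 : |z.1| ^ (2 * δ) / |z.2| ^ (2 * σ * δ)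
        ≤ (|z.1| ^ (2 * δ) + |z.2| ^ (2 * δ)) / |z.2| ^ (2 * σ * δ) := by
      have hnum : |z.1| ^ (2 * δ) ≤ |z.1| ^ (2 * δ) + |z.2| ^ (2 * δ) :=
        le_add_of_nonneg_right (Real.rpow_nonneg (abs_nonneg z.2) _)
      gcongr
    unfold phi2
    have habs : M ≤ |M| := le_abs_self M
    linarith
  · -- drift condition
    exact ⟨-(δ * ((α₁ - σ * α₂) + κ₂ * σ * (2 * σ * δ + 1))), by linarith, D, hD0,
      fun z hz => by have h := key z hz; linarith [h]⟩
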